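/- arXiv:math/0109186 — 3 statements merged into one kernel-verified Lean document; each statement's English description precedes it below -/
import Mathlib

section
/- Let X be a metric space, p ∈ X and ε > 0. Assume: (i) the closed ball of radius ε around p is compact; (ii) for every point x ∈ X and every δ > 0 there is a continuous path γ : [0,1] → X with γ(0) = p, γ(1) = x, and dist(p, γ(t)) + dist(γ(t), x) ≤ dist(p, x) + δ for all t ∈ [0,1]; (iii) for every q ∈ X with dist(p, q) = ε there exists a bijective isometry φ : X → X with φ(p) = q. Then X is a complete metric space. -/
open Metric Set Filter

/-- A metric space with a compact closed ball around `p`, almost-geodesic paths from `p`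
to every point, and bijective isometries moving `p` to every point of the sphere of
radius `ε` around `p`, is complete. -/
theorem grauert_domain_complete {X : Type*} [MetricSpace X] (p : X) (ε : ℝ) (hε : 0 < ε)
    (hcompact : IsCompact (Metric.closedBall p ε))
    (hpaths : ∀ (x : X) (δ : ℝ), 0 < δ →
      ∃ γ : ℝ → X, ContinuousOn γ (Set.Icc 0 1) ∧ γ 0 = p ∧ γ 1 = x ∧
        ∀ t ∈ Set.Icc (0 : ℝ) 1, dist p (γ t) + dist (γ t) x ≤ dist p x + δ)
    (hhomog : ∀ q : X, dist p q = ε →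
      ∃ φ : X ≃ X, (∀ x y : X, dist (φ x) (φ y) = dist x y) ∧ φ p = q) :
    CompleteSpace X := by
  classical
  -- T : orbit of p under bijective isometries
  set T : Set X := {q | ∃ φ : X ≃ X, (∀ x y : X, dist (φ x) (φ y) = dist x y) ∧ φ p = q}
    with hT
  have hpT : p ∈ T := ⟨Equiv.refl X, fun x y => rfl, rfl⟩
  -- stepping along spheres stays in T
  have hstep : ∀ q ∈ T, ∀ y : X, dist q y = ε → y ∈ T := by
    rintro q ⟨φ, hφ, hφp⟩ y hqy
    have h1 : dist p (φ.symm y) = ε := by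
      have := hφ p (φ.symm y)
      rw [hφp, φ.apply_symm_apply, hqy] at this
      exact this.symm
    obtain ⟨ψ, hψ, hψp⟩ := hhomog _ h1
    refine ⟨ψ.trans φ, fun a b => ?_, ?_⟩
    · simp [Equiv.trans_apply, hφ, hψ]
    · simp [Equiv.trans_apply, hψp, φ.apply_symm_apply]
  -- balls of radius ε around points of T are compact
  have hballT : ∀ q ∈ T, IsCompact (Metric.closedBall q ε) := by
    rintro q ⟨φ, hφ, hφp⟩
    have hiso : Isometry φ := Isometry.of_dist_eq hφ
    have himg : φ '' Metric.closedBall p ε = Metric.closedBall q ε := by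
      apply Set.Subset.antisymm
      · rintro _ ⟨x, hx, rfl⟩
        rw [Metric.mem_closedBall] at hx ⊢
        calc dist (φ x) q = dist (φ x) (φ p) := by rw [hφp]
          _ = dist x p := hφ x p
          _ ≤ ε := hx
      · intro y hy
        refine ⟨φ.symm y, ?_, φ.apply_symm_apply y⟩
        rw [Metric.mem_closedBall] at hy ⊢
        calc dist (φ.symm y) p = dist (φ (φ.symm y)) (φ p) := (hφ _ _).symm
          _ = dist y q := by rw [φ.apply_symm_apply, hφp]
          _ ≤ ε := hy
    rw [← himg]
    exact hcompact.image hiso.continuous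
  -- almost-geodesic paths from any point of T
  have hpathT : ∀ q ∈ T, ∀ (x : X) (δ : ℝ), 0 < δ →
      ∃ γ : ℝ → X, ContinuousOn γ (Set.Icc 0 1) ∧ γ 0 = q ∧ γ 1 = x ∧
        ∀ t ∈ Set.Icc (0 : ℝ) 1, dist q (γ t) + dist (γ t) x ≤ dist q x + δ := by
    rintro q ⟨φ, hφ, hφp⟩ x δ hδ
    obtain ⟨γ₀, hγc, hγ0, hγ1, hγd⟩ := hpaths (φ.symm x) δ hδ
    have hiso : Isometry φ := Isometry.of_dist_eq hφ
    refine ⟨fun t => φ (γ₀ t), hiso.continuous.comp_continuousOn hγc, ?_, ?_, ?_⟩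
    · show φ (γ₀ 0) = q
      rw [hγ0, hφp]
    · show φ (γ₀ 1) = x
      rw [hγ1, φ.apply_symm_apply]
    · intro t ht
      have h1 : dist q (φ (γ₀ t)) = dist p (γ₀ t) := by
        rw [← hφp]; exact hφ p (γ₀ t)
      have h2 : dist (φ (γ₀ t)) x = dist (γ₀ t) (φ.symm x) := by
        conv_lhs => rw [← φ.apply_symm_apply x]
        exact hφ _ _
      have h3 : dist q x = dist p (φ.symm x) := by
        rw [← hφp]; conv_lhs => rw [← φ.apply_symm_apply x]
        exact hφ _ _
      show dist q (φ (γ₀ t)) + dist (φ (γ₀ t)) x ≤ dist q x + δ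
      rw [h1, h2, h3]
      exact hγd t ht
  -- stepping towards a far away point
  have hstep2 : ∀ q ∈ T, ∀ x : X, ε ≤ dist q x →
      ∃ y : X, dist q y = ε ∧ y ∈ T ∧ dist y x ≤ dist q x - 3 * ε / 4 := by
    intro q hq x hx
    obtain ⟨γ, hγc, hγ0, hγ1, hγd⟩ := hpathT q hq x (ε / 4) (by linarith)
    have hf : ContinuousOn (fun t => dist q (γ t)) (Set.Icc (0:ℝ) 1) :=
      (continuous_const.dist continuous_id).comp_continuousOn hγc
    have hIVT := intermediate_value_Icc (by norm_num : (0:ℝ) ≤ 1) hf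
    have hεmem : ε ∈ Set.Icc (dist q (γ 0)) (dist q (γ 1)) := by
      rw [hγ0, hγ1, dist_self]
      exact ⟨le_of_lt hε, hx⟩
    obtain ⟨t, ht, htε⟩ := hIVT hεmem
    simp only at htε
    refine ⟨γ t, htε, hstep q hq (γ t) htε, ?_⟩
    have := hγd t ht
    rw [htε] at this
    linarith
  -- main induction : balls of radius ε + n * (ε/2) around T-points are seq. compact
  have key : ∀ n : ℕ, ∀ q ∈ T, IsSeqCompact (Metric.closedBall q (ε + n * (ε / 2))) := by
    intro n
    induction n with
    | zero =>
      intro q hq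
      have := (hballT q hq).isSeqCompact
      simpa using this
    | succ n ih =>
      intro q hq u hu
      by_cases hfreq : ∃ᶠ k in atTop, u k ∈ Metric.closedBall q ε
      · obtain ⟨φ₀, hφ₀, hφ₀m⟩ := Filter.extraction_of_frequently_atTop hfreq
        obtain ⟨a, ha, φ₁, hφ₁, hconv⟩ := (hballT q hq).tendsto_subseq hφ₀m
        refine ⟨a, ?_, φ₀ ∘ φ₁, hφ₀.comp hφ₁, hconv⟩
        refine Metric.closedBall_subset_closedBall ?_ ha
        have : (0:ℝ) ≤ (n + 1 : ℕ) := Nat.cast_nonneg _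
        nlinarith
      · -- eventually far from q
        rw [Filter.not_frequently] at hfreq
        obtain ⟨K, hK⟩ := (Filter.eventually_atTop).1 hfreq
        have hfar : ∀ k, ε ≤ dist q (u (k + K)) := by
          intro k
          have := hK (k + K) (Nat.le_add_left K k)
          rw [Metric.mem_closedBall, dist_comm] at this
          push_neg at this
          exact this.le
        choose y hyd hyT hyx using fun k => hstep2 q hq (u (k + K)) (hfar k)
        have hsphere : IsCompact (Metric.sphere q ε) :=
          (hballT q hq).of_isClosed_subset Metric.isClosed_sphere Metric.sphere_subset_closedBall
        have hymem : ∀ k, y k ∈ Metric.sphere q ε := by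
          intro k
          rw [Metric.mem_sphere, dist_comm]
          exact hyd k
        obtain ⟨ylim, hylim, φ₁, hφ₁, hyconv⟩ := hsphere.tendsto_subseq hymem
        rw [Metric.mem_sphere] at hylim
        have hylimT : ylim ∈ T := hstep q hq ylim (by rw [dist_comm]; exact hylim)
        obtain ⟨J, hJ⟩ := (Metric.tendsto_atTop.1 hyconv) (ε / 4) (by linarith)
        have hw : ∀ j, u (φ₁ (j + J) + K) ∈ Metric.closedBall ylim (ε + n * (ε / 2)) := by
          intro j
          rw [Metric.mem_closedBall, dist_comm]
          have h1 : dist (y (φ₁ (j + J))) ylim < ε / 4 := hJ (j + J) (Nat.le_add_left J j)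
          have h2 : dist (y (φ₁ (j + J))) (u (φ₁ (j + J) + K)) ≤
              dist q (u (φ₁ (j + J) + K)) - 3 * ε / 4 := hyx (φ₁ (j + J))
          have h3 : dist q (u (φ₁ (j + J) + K)) ≤ ε + (n + 1 : ℕ) * (ε / 2) := by
            have := hu (φ₁ (j + J) + K)
            rw [Metric.mem_closedBall, dist_comm] at this
            exact this
          have h4 : dist ylim (u (φ₁ (j + J) + K)) ≤
              dist ylim (y (φ₁ (j + J))) + dist (y (φ₁ (j + J))) (u (φ₁ (j + J) + K)) :=
            dist_triangle _ _ _
          rw [dist_comm ylim (y (φ₁ (j + J)))] at h4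
          push_cast at h3
          linarith
        obtain ⟨a, ha, φ₂, hφ₂, haconv⟩ := ih ylim hylimT hw
        refine ⟨a, ?_, fun j => φ₁ (φ₂ j + J) + K, ?_, haconv⟩
        · -- a ∈ closedBall q (ε + (n+1) * (ε/2)) : limit of points of the closed ball
          have hcl : IsClosed (Metric.closedBall q (ε + ((n : ℕ) + 1 : ℕ) * (ε / 2))) :=
            Metric.isClosed_closedBall
          exact hcl.mem_of_tendsto haconv
            (Filter.Eventually.of_forall fun j => hu _)
        · intro i j hij
          have : φ₂ i + J < φ₂ j + J := by
            have := hφ₂ hij; omega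
          exact Nat.add_lt_add_right (hφ₁ this) K
  -- conclude completeness
  apply Metric.complete_of_cauchySeq_tendsto
  intro u hu
  obtain ⟨R, hR, hRd⟩ := cauchySeq_bdd hu
  obtain ⟨n, hn⟩ := exists_nat_ge ((dist p (u 0) + R) / (ε / 2))
  have hnball : ∀ k, u k ∈ Metric.closedBall p (ε + n * (ε / 2)) := by
    intro k
    rw [Metric.mem_closedBall, dist_comm]
    have h1 : dist p (u k) ≤ dist p (u 0) + dist (u 0) (u k) := dist_triangle _ _ _
    have h2 : dist (u 0) (u k) < R := hRd 0 k
    have h3 : dist p (u 0) + R ≤ n * (ε / 2) := by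
      rw [div_le_iff₀ (by linarith : (0:ℝ) < ε / 2)] at hn
      linarith
    linarith
  obtain ⟨a, _, φ, hφ, hconv⟩ := key n p hpT hnball
  exact ⟨a, tendsto_nhds_of_cauchySeq_of_subseq hu hφ.tendsto_atTop hconv⟩
end

section
/- For every complex number z with cosh(z) ≠ 0, one has |tanh(z)| < 1 if and only if cos(2·Im(z)) > 0. In particular, if |Im(z)| < π/4 then |tanh(z)| < 1. -/
open Complex

lemma normSq_cosh_sub_normSq_sinh (z : ℂ) :
    Complex.normSq (Complex.cosh z) - Complex.normSq (Complex.sinh z)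
      = Real.cos (2 * z.im) := by
  have hz : z = (z.re : ℂ) + (z.im : ℂ) * I := (Complex.re_add_im z).symm
  have hs : Complex.sinh z
      = (Real.sinh z.re * Real.cos z.im : ℝ) + (Real.cosh z.re * Real.sin z.im : ℝ) * I := by
    conv_lhs => rw [hz]
    rw [Complex.sinh_add, Complex.sinh_mul_I, Complex.cosh_mul_I]
    simp only [Complex.ofReal_mul, Complex.ofReal_sinh, Complex.ofReal_cosh,
      Complex.ofReal_sin, Complex.ofReal_cos]
    ring
  have hc : Complex.cosh z
      = (Real.cosh z.re * Real.cos z.im : ℝ) + (Real.sinh z.re * Real.sin z.im : ℝ) * I := by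
    conv_lhs => rw [hz]
    rw [Complex.cosh_add, Complex.sinh_mul_I, Complex.cosh_mul_I]
    simp only [Complex.ofReal_mul, Complex.ofReal_sinh, Complex.ofReal_cosh,
      Complex.ofReal_sin, Complex.ofReal_cos]
    ring
  rw [hs, hc, Complex.normSq_add_mul_I, Complex.normSq_add_mul_I, Real.cos_two_mul']
  have h1 := Real.cosh_sq z.re
  nlinarith [Real.sin_sq_add_cos_sq z.im]

/-- `|tanh z| < 1` iff `cos (2 Im z) > 0`; in particular `|Im z| < π/4` implies
`|tanh z| < 1`. -/
theorem abs_tanh_lt_one_iff (z : ℂ) (hz : Complex.cosh z ≠ 0) :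
    (‖Complex.tanh z‖ < 1 ↔ 0 < Real.cos (2 * z.im)) ∧
    (|z.im| < Real.pi / 4 → ‖Complex.tanh z‖ < 1) := by
  have hcpos : 0 < ‖Complex.cosh z‖ := by
    simpa [norm_pos_iff] using hz
  have key : ‖Complex.tanh z‖ < 1 ↔ 0 < Real.cos (2 * z.im) := by
    rw [Complex.tanh_eq_sinh_div_cosh, norm_div, div_lt_one hcpos,
      ← normSq_cosh_sub_normSq_sinh z]
    rw [← Complex.sq_norm, ← Complex.sq_norm, sub_pos]
    constructor
    · intro h
      exact pow_lt_pow_left₀ h (norm_nonneg _) (by norm_num)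
    · intro h
      exact lt_of_pow_lt_pow_left₀ 2 (norm_nonneg _) h
  refine ⟨key, fun h => key.mpr ?_⟩
  apply Real.cos_pos_of_mem_Ioo
  constructor <;> [nlinarith [abs_lt.mp h]; nlinarith [abs_lt.mp h]]
end

section
/- Let E be a finite-dimensional real normed vector space, let α₁, …, α_m be continuous linear functionals on E whose span is the full dual space of E, let c > 0, and set Ω = {x ∈ E : |α_i(x)| < c for all i} and u(x) = Σ_{i=1}^m 1/(c² − (α_i(x))²). Then u is strictly convex on Ω, and for every real C the sublevel set {x ∈ Ω : u(x) ≤ C} is compact. -/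
lemma aux_key' {p q t s : ℝ} : (t * q + p * s) * (t * p + s * q)
    = p * q * (t + s) ^ 2 + t * s * (p - q) ^ 2 := by ring

lemma aux_lt' {p q t s : ℝ} (hp : 0 < p) (hq : 0 < q) (ht : 0 < t) (hs : 0 < s)
    (hts : t + s = 1) (hpq : p ≠ q) :
    1 / (t * p + s * q) < t / p + s / q := by
  rw [div_add_div _ _ hp.ne' hq.ne', div_lt_div_iff₀ (by positivity) (by positivity)]
  have h1 : 0 < t * s * (p - q) ^ 2 := by
    have := sub_ne_zero_of_ne hpq
    positivity
  have h2 := aux_key' (p := p) (q := q) (t := t) (s := s)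
  rw [hts] at h2
  nlinarith [h1, h2]

lemma aux_le' {p q t s : ℝ} (hp : 0 < p) (hq : 0 < q) (ht : 0 < t) (hs : 0 < s)
    (hts : t + s = 1) :
    1 / (t * p + s * q) ≤ t / p + s / q := by
  rw [div_add_div _ _ hp.ne' hq.ne', div_le_div_iff₀ (by positivity) (by positivity)]
  have h1 : 0 ≤ t * s * (p - q) ^ 2 := by positivity
  have h2 := aux_key' (p := p) (q := q) (t := t) (s := s)
  rw [hts] at h2
  nlinarith [h1, h2]

lemma phi_split' {c a : ℝ} (h1 : 0 < c - a) (h2 : 0 < c + a) :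
    1 / (c ^ 2 - a ^ 2) = (1 / (2 * c)) * (1 / (c - a) + 1 / (c + a)) := by
  have hc : 0 < c := by linarith
  have hsq : c ^ 2 - a ^ 2 = (c - a) * (c + a) := by ring
  rw [hsq]
  field_simp
  ring

lemma phi_common {c a b t s : ℝ} (hc : 0 < c) (ha : |a| < c) (hb : |b| < c)
    (ht : 0 < t) (hs : 0 < s) (hts : t + s = 1) :
    (1 / (c ^ 2 - (t * a + s * b) ^ 2) ≤
      t * (1 / (c ^ 2 - a ^ 2)) + s * (1 / (c ^ 2 - b ^ 2))) ∧
    (a ≠ b → 1 / (c ^ 2 - (t * a + s * b) ^ 2) <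
      t * (1 / (c ^ 2 - a ^ 2)) + s * (1 / (c ^ 2 - b ^ 2))) := by
  have ha' := abs_lt.mp ha
  have hb' := abs_lt.mp hb
  have hp1 : 0 < c - a := by linarith
  have hp2 : 0 < c + a := by linarith
  have hq1 : 0 < c - b := by linarith
  have hq2 : 0 < c + b := by linarith
  have hs1 : s = 1 - t := by linarith
  have hz1 : c - (t * a + s * b) = t * (c - a) + s * (c - b) := by
    subst hs1; ring
  have hz2 : c + (t * a + s * b) = t * (c + a) + s * (c + b) := by
    subst hs1; ring
  have hz1' : 0 < c - (t * a + s * b) := by rw [hz1]; positivity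
  have hz2' : 0 < c + (t * a + s * b) := by rw [hz2]; positivity
  have h2c : (0:ℝ) < 1 / (2 * c) := by positivity
  have key : ∀ u v : ℝ, (1 / (2 * c)) * ((t / (c - a) + s / (c - b)) + (t / (c + a) + s / (c + b)))
      = t * (1 / (c ^ 2 - a ^ 2)) + s * (1 / (c ^ 2 - b ^ 2)) := by
    intro _ _
    rw [phi_split' hp1 hp2, phi_split' hq1 hq2]
    ring
  constructor
  · rw [phi_split' hz1' hz2', hz1, hz2, ← key 0 0]
    have l1 := aux_le' hp1 hq1 ht hs hts
    have l2 := aux_le' hp2 hq2 ht hs hts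
    apply mul_le_mul_of_nonneg_left _ h2c.le
    linarith
  · intro hab
    rw [phi_split' hz1' hz2', hz1, hz2, ← key 0 0]
    have l1 := aux_lt' hp1 hq1 ht hs hts (fun h => hab (by linarith))
    have l2 := aux_lt' hp2 hq2 ht hs hts (fun h => hab (by linarith))
    apply mul_lt_mul_of_pos_left _ h2c
    linarith

/-- The function `u(x) = Σᵢ 1/(c² − αᵢ(x)²)` is strictly convex on
`Ω = {x : |αᵢ(x)| < c ∀ i}` and its sublevel sets in `Ω` are compact. -/
theorem exhaustion_strictly_convex
    {E : Type*} [NormedAddCommGroup E] [NormedSpace ℝ E] [FiniteDimensional ℝ E]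
    {m : ℕ} (α : Fin m → E →L[ℝ] ℝ)
    (hspan : Submodule.span ℝ (Set.range α) = ⊤)
    (c : ℝ) (hc : 0 < c) :
    StrictConvexOn ℝ {x : E | ∀ i, |α i x| < c}
      (fun x : E => ∑ i : Fin m, 1 / (c ^ 2 - (α i x) ^ 2)) ∧
    ∀ C : ℝ, IsCompact {x : E | (∀ i, |α i x| < c) ∧
      (∑ i : Fin m, 1 / (c ^ 2 - (α i x) ^ 2)) ≤ C} := by
  -- every vector killed by all αᵢ is zero
  have hker : ∀ v : E, (∀ i, α i v = 0) → v = 0 := by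
    intro v hv
    by_contra h0
    have key : ∀ g ∈ Submodule.span ℝ (Set.range α), g v = 0 := by
      intro g hg
      induction hg using Submodule.span_induction with
      | mem g hg => obtain ⟨i, rfl⟩ := hg; exact hv i
      | zero => simp
      | add g h _ _ hg hh => simp [ContinuousLinearMap.add_apply, hg, hh]
      | smul r g _ hg => simp [ContinuousLinearMap.smul_apply, hg]
    obtain ⟨f, hf⟩ := SeparatingDual.exists_ne_zero (R := ℝ) h0
    exact hf (key f (by rw [hspan]; exact Submodule.mem_top))
  have hden_pos : ∀ (x : E), (∀ i, |α i x| < c) → ∀ i, 0 < c ^ 2 - (α i x) ^ 2 := by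
    intro x hx i
    have h := abs_lt.mp (hx i)
    nlinarith [h.1, h.2]
  constructor
  · -- strict convexity
    constructor
    · -- convexity of Ω
      intro x hx y hy t s ht hs hts
      intro i
      have hmap : α i (t • x + s • y) = t * α i x + s * α i y := by
        rw [map_add, map_smul, map_smul]; rfl
      set M := max |α i x| |α i y| with hM
      calc |α i (t • x + s • y)| = |t * α i x + s * α i y| := by rw [hmap]
        _ ≤ |t * α i x| + |s * α i y| := abs_add_le _ _
        _ = t * |α i x| + s * |α i y| := by
            rw [abs_mul, abs_mul, abs_of_nonneg ht, abs_of_nonneg hs]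
        _ ≤ t * M + s * M := add_le_add
            (mul_le_mul_of_nonneg_left (le_max_left _ _) ht)
            (mul_le_mul_of_nonneg_left (le_max_right _ _) hs)
        _ = M := by rw [← add_mul, hts, one_mul]
        _ < c := max_lt (hx i) (hy i)
    · intro x hx y hy hxy t s ht hs hts
      simp only [Set.mem_setOf_eq] at hx hy
      obtain ⟨i₀, hi₀⟩ : ∃ i, α i x ≠ α i y := by
        by_contra h
        push_neg at h
        apply hxy
        exact sub_eq_zero.mp (hker _ (fun i => by rw [map_sub, h i, sub_self]))
      have hz : ∀ i : Fin m, α i (t • x + s • y) = t * α i x + s * α i y := by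
        intro i; rw [map_add, map_smul, map_smul]; rfl
      have hle : ∀ i ∈ Finset.univ, 1 / (c ^ 2 - (α i (t • x + s • y)) ^ 2) ≤
          t * (1 / (c ^ 2 - (α i x) ^ 2)) + s * (1 / (c ^ 2 - (α i y) ^ 2)) := by
        intro i _
        rw [hz i]
        exact (phi_common hc (hx i) (hy i) ht hs hts).1
      have hlt : 1 / (c ^ 2 - (α i₀ (t • x + s • y)) ^ 2) <
          t * (1 / (c ^ 2 - (α i₀ x) ^ 2)) + s * (1 / (c ^ 2 - (α i₀ y) ^ 2)) := by
        rw [hz i₀]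
        exact (phi_common hc (hx i₀) (hy i₀) ht hs hts).2 hi₀
      have := Finset.sum_lt_sum hle ⟨i₀, Finset.mem_univ _, hlt⟩
      simp only [smul_eq_mul]
      calc ∑ i : Fin m, 1 / (c ^ 2 - (α i (t • x + s • y)) ^ 2)
          < ∑ i : Fin m, (t * (1 / (c ^ 2 - (α i x) ^ 2)) + s * (1 / (c ^ 2 - (α i y) ^ 2))) := this
        _ = t * (∑ i : Fin m, 1 / (c ^ 2 - (α i x) ^ 2)) + s * (∑ i : Fin m, 1 / (c ^ 2 - (α i y) ^ 2)) := by
            rw [Finset.sum_add_distrib, Finset.mul_sum, Finset.mul_sum]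
  · -- compactness of sublevel sets
    intro C
    set C' := max C (1 / c ^ 2) with hC'def
    have hC' : 0 < C' := lt_of_lt_of_le (by positivity) (le_max_right _ _)
    set d := c ^ 2 - 1 / C' with hddef
    set S := {x : E | ∀ i, (α i x) ^ 2 ≤ d} with hSdef
    have hSclosed : IsClosed S := by
      have : S = ⋂ i, {x : E | (α i x) ^ 2 ≤ d} := by
        ext x; simp [hSdef, Set.mem_iInter]
      rw [this]
      exact isClosed_iInter fun i =>
        isClosed_le (((α i).continuous).pow 2) continuous_const
    have hSden : ∀ x ∈ S, ∀ i, 1 / C' ≤ c ^ 2 - (α i x) ^ 2 := by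
      intro x hxS i
      have := hxS i
      simp only [hddef] at this
      linarith
    have hucont : ContinuousOn (fun x : E => ∑ i : Fin m, 1 / (c ^ 2 - (α i x) ^ 2)) S := by
      apply continuousOn_finset_sum
      intro i _
      apply ContinuousOn.div continuousOn_const
      · exact (continuous_const.sub (((α i).continuous).pow 2)).continuousOn
      · intro x hxS
        have := hSden x hxS i
        have h1 : (0:ℝ) < 1 / C' := by positivity
        linarith
    have hKeq : {x : E | (∀ i, |α i x| < c) ∧
        (∑ i : Fin m, 1 / (c ^ 2 - (α i x) ^ 2)) ≤ C}
        = S ∩ (fun x : E => ∑ i : Fin m, 1 / (c ^ 2 - (α i x) ^ 2)) ⁻¹' Set.Iic C := by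
      ext x
      simp only [Set.mem_setOf_eq, Set.mem_inter_iff, Set.mem_preimage, Set.mem_Iic, hSdef]
      constructor
      · rintro ⟨hx, hsum⟩
        refine ⟨fun i => ?_, hsum⟩
        have hpos := hden_pos x hx
        have hnn : ∀ j ∈ Finset.univ, (0:ℝ) ≤ 1 / (c ^ 2 - (α j x) ^ 2) := by
          intro j _
          have := hpos j
          positivity
        have hterm : 1 / (c ^ 2 - (α i x) ^ 2) ≤ C :=
          le_trans (Finset.single_le_sum hnn (Finset.mem_univ i)) hsum
        have hterm' : 1 / (c ^ 2 - (α i x) ^ 2) ≤ C' := hterm.trans (le_max_left _ _)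
        have hge : 1 / C' ≤ c ^ 2 - (α i x) ^ 2 := by
          rw [div_le_iff₀ (hpos i)] at hterm'
          rw [div_le_iff₀ hC']
          nlinarith [hpos i]
        simp only [hddef]
        linarith
      · rintro ⟨hxS, hsum⟩
        refine ⟨fun i => ?_, hsum⟩
        have h1 : (α i x) ^ 2 ≤ d := hxS i
        have h2 : (0:ℝ) < 1 / C' := by positivity
        have h3 : (α i x) ^ 2 < c ^ 2 := by simp only [hddef] at h1; linarith
        have h4 : |α i x| ^ 2 < c ^ 2 := by rwa [sq_abs]
        exact lt_of_pow_lt_pow_left₀ 2 hc.le h4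
    have hKclosed : IsClosed {x : E | (∀ i, |α i x| < c) ∧
        (∑ i : Fin m, 1 / (c ^ 2 - (α i x) ^ 2)) ≤ C} := by
      rw [hKeq]
      exact hucont.preimage_isClosed_of_isClosed hSclosed isClosed_Iic
    set T : E →ₗ[ℝ] (Fin m → ℝ) := LinearMap.pi (fun i => (α i).toLinearMap) with hTdef
    have hTker : LinearMap.ker T = ⊥ := by
      rw [LinearMap.ker_eq_bot']
      intro v hv
      exact hker v (fun i => by simpa [hTdef] using congrFun hv i)
    have hemb := LinearMap.isClosedEmbedding_of_injective hTker
    have hPcomp : IsCompact (T ⁻¹' (Set.univ.pi fun _ : Fin m => Set.Icc (-c) c)) :=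
      hemb.isCompact_preimage (isCompact_univ_pi fun _ => isCompact_Icc)
    apply hPcomp.of_isClosed_subset hKclosed
    intro x hx
    simp only [Set.mem_preimage, Set.mem_univ_pi, hTdef, LinearMap.pi_apply,
      ContinuousLinearMap.coe_coe, Set.mem_Icc]
    intro i
    have := abs_le.mp (hx.1 i).le
    exact ⟨this.1, this.2⟩
end
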